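/- Let x̄ ∈ ℝ^{nN}, define ȳ ∈ ℝ^{mN} by ȳ_i = A_i x̄_i − b_i for each i, and set σ̄ = M_n x̄. Then x̄ is a variational generalized aggregative equilibrium (v-GAE) of the aggregative game if and only if the triple (x̄, ȳ, σ̄) is a variational generalized Nash equilibrium (v-GNE) of the extended game. -/

import Mathlib

noncomputable section

open Matrix Finset Filter

/-- A vector in `ℝ^k`. -/
abbrev Vec (k : ℕ) := Fin k → ℝ

/-- A block vector in `ℝ^{kN}` (N blocks of size k). -/
abbrev VecN (N k : ℕ) := Fin N → Vec k

/-- Standard inner product on `ℝ^k`. -/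
def dot {k : ℕ} (u v : Vec k) : ℝ := ∑ j, u j * v j

/-- Standard inner product on `ℝ^{kN}`. -/
def dotN {N k : ℕ} (u v : VecN N k) : ℝ := ∑ i, dot (u i) (v i)

/-- Subdifferential of `g : ℝ^p → ℝ` at `x`. -/
def subdiff {p : ℕ} (g : Vec p → ℝ) (x : Vec p) : Set (Vec p) :=
  {v | ∀ z, g x + dot v (z - x) ≤ g z}

/-- Normal cone of `S ⊆ ℝ^p` at `x` (empty if `x ∉ S`). -/
def normalCone {p : ℕ} (S : Set (Vec p)) (x : Vec p) : Set (Vec p) :=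
  {v | x ∈ S ∧ ∀ z ∈ S, dot v (z - x) ≤ 0}

/-- The nonnegative orthant `ℝ^m_{≥0}`. -/
def orthant (m : ℕ) : Set (Vec m) := {v | ∀ j, 0 ≤ v j}

/-- Euclidean projection onto the nonnegative orthant. -/
def projPos {m : ℕ} (v : Vec m) : Vec m := fun j => max (v j) 0

/-- `M x = (1/N) Σ_i x_i` (the averaging map `M_n`, resp. its `m`-dim analogue). -/
def Mavg {N k : ℕ} (x : VecN N k) : Vec k := (N : ℝ)⁻¹ • ∑ i, x i

/-- `P y = Σ_i y_i`. -/
def Psum {N k : ℕ} (y : VecN N k) : Vec k := ∑ i, y i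

/-- `Mᵀ μ` : transpose of the averaging map. -/
def MavgT (N : ℕ) {k : ℕ} (μ : Vec k) : VecN N k := fun _ => (N : ℝ)⁻¹ • μ

/-- `Pᵀ λ` : transpose of the summing map. -/
def PsumT (N : ℕ) {k : ℕ} (l : Vec k) : VecN N k := fun _ => l

/-- Monotonicity of a set-valued map w.r.t. an inner product `ip`. -/
def MonoOn {V : Type} [AddCommGroup V] (ip : V → V → ℝ) (F : V → Set V) : Prop :=
  ∀ ω ω' u v, u ∈ F ω → v ∈ F ω' → 0 ≤ ip (u - v) (ω - ω')

/-- Maximal monotonicity of a set-valued map w.r.t. an inner product `ip`. -/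
def MaxMonoOn {V : Type} [AddCommGroup V] (ip : V → V → ℝ) (F : V → Set V) : Prop :=
  MonoOn ip F ∧ ∀ ω u, (∀ ω' v, v ∈ F ω' → 0 ≤ ip (u - v) (ω - ω')) → u ∈ F ω

/-- `A x = Σ_i A_i x_i` for `A = [A_1 ⋯ A_N]`. -/
def bigA {N n m : ℕ} (A : Fin N → Matrix (Fin m) (Fin n) ℝ) (x : VecN N n) : Vec m :=
  ∑ i, (A i).mulVec (x i)

/-- The collective feasible set `𝒳 = (∏_i Ω_i) ∩ {x : A x ≤ b}`. -/
def Xfeas {N n m : ℕ} (Ω : Fin N → Set (Vec n)) (A : Fin N → Matrix (Fin m) (Fin n) ℝ)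
    (b : Fin N → Vec m) : Set (VecN N n) :=
  {x | (∀ i, x i ∈ Ω i) ∧ ∀ j, bigA A x j ≤ (∑ i, b i) j}

/-- Extended pseudo-subdifferential `F_e(x, σ)`. -/
def Fe {N n : ℕ} (f : Fin N → Vec n → Vec n → ℝ) (x : VecN N n) (σ : Vec n) :
    Set (VecN N n) :=
  {g | ∀ i, g i ∈ subdiff (fun z => f i z σ) (x i)}

/-- Aggregative pseudo-subdifferential `F_a(x) = F_e(x, M_n x)`. -/
def Fa {N n : ℕ} (f : Fin N → Vec n → Vec n → ℝ) (x : VecN N n) : Set (VecN N n) :=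
  Fe f x (Mavg x)

/-- `x̄` is a variational generalized aggregative equilibrium (v-GAE):
it solves GVI(𝒳, F_a). -/
def isVGAE {N n m : ℕ} (Ω : Fin N → Set (Vec n)) (f : Fin N → Vec n → Vec n → ℝ)
    (A : Fin N → Matrix (Fin m) (Fin n) ℝ) (b : Fin N → Vec m) (xbar : VecN N n) : Prop :=
  xbar ∈ Xfeas Ω A b ∧ ∃ g ∈ Fa f xbar, ∀ x ∈ Xfeas Ω A b, 0 ≤ dotN g (x - xbar)

/-- The local constraint set `C = {(x,y) : x_i ∈ Ω_i, y_i = A_i x_i - b_i}`. -/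
def Cset {N n m : ℕ} (Ω : Fin N → Set (Vec n)) (A : Fin N → Matrix (Fin m) (Fin n) ℝ)
    (b : Fin N → Vec m) : Set (VecN N n × VecN N m) :=
  {p | ∀ i, p.1 i ∈ Ω i ∧ p.2 i = (A i).mulVec (p.1 i) - b i}

/-- Inner product on `ℝ^{nN} × ℝ^{mN}`. -/
def ip2 {N n m : ℕ} (p q : VecN N n × VecN N m) : ℝ := dotN p.1 q.1 + dotN p.2 q.2

/-- Normal cone in `ℝ^{nN} × ℝ^{mN}` (empty outside the set). -/
def nconeC {N n m : ℕ} (C : Set (VecN N n × VecN N m)) (p : VecN N n × VecN N m) :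
    Set (VecN N n × VecN N m) :=
  {v | p ∈ C ∧ ∀ q ∈ C, ip2 v (q - p) ≤ 0}

/-- Inner product on `ℝ^{nN} × ℝ^{mN} × ℝ^n`. -/
def ip3 {N n m : ℕ} (p q : VecN N n × VecN N m × Vec n) : ℝ :=
  dotN p.1 q.1 + dotN p.2.1 q.2.1 + dot p.2.2 q.2.2

/-- Coupling constraint set `𝒱` of the extended game. -/
def Vfeas (N n m : ℕ) : Set (VecN N n × VecN N m × Vec n) :=
  {w | (∀ j, Psum w.2.1 j ≤ 0) ∧ w.2.2 = Mavg w.1}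

/-- The operator `𝒰(x,y,σ) = {(g + u, w, 0) : g ∈ F_e(x,σ), (u,w) ∈ N_C(x,y)}`. -/
def Uop {N n m : ℕ} (Ω : Fin N → Set (Vec n)) (f : Fin N → Vec n → Vec n → ℝ)
    (A : Fin N → Matrix (Fin m) (Fin n) ℝ) (b : Fin N → Vec m)
    (x : VecN N n) (y : VecN N m) (σ : Vec n) : Set (VecN N n × VecN N m × Vec n) :=
  {h | ∃ g ∈ Fe f x σ, ∃ uw ∈ nconeC (Cset Ω A b) (x, y), h = (g + uw.1, uw.2, 0)}

/-- `(x,y,σ)` is a v-GNE of the extended game: it solves GVI(𝒱, 𝒰). -/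
def isVGNEext {N n m : ℕ} (Ω : Fin N → Set (Vec n)) (f : Fin N → Vec n → Vec n → ℝ)
    (A : Fin N → Matrix (Fin m) (Fin n) ℝ) (b : Fin N → Vec m)
    (x : VecN N n) (y : VecN N m) (σ : Vec n) : Prop :=
  (x, y, σ) ∈ Vfeas N n m ∧
    ∃ h ∈ Uop Ω f A b x y σ, ∀ w ∈ Vfeas N n m, 0 ≤ ip3 h (w - (x, y, σ))


/-! ### Auxiliary lemmas -/

private lemma eps_le' {a b c : ℝ} (h : ∀ ε : ℝ, 0 < ε → a < b + ε * c) : a ≤ b := by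
  by_contra h'
  push_neg at h'
  rcases le_or_gt c 0 with hc | hc
  · have := h 1 one_pos; nlinarith
  · have h2 : ((a - b) / (2 * c)) * c = (a - b) / 2 := by field_simp
    have := h ((a - b) / (2 * c)) (div_pos (by linarith) (by linarith))
    rw [h2] at this; linarith

private lemma cone_scale' {c u : ℝ} (h : ∀ t : ℝ, 0 < t → t * c ≤ u) : c ≤ 0 := by
  by_contra h'
  push_neg at h'
  have ht : (0:ℝ) < (max u 0 + 1) / c := by positivity
  have h2 : ((max u 0 + 1) / c) * c = max u 0 + 1 := div_mul_cancel₀ _ (ne_of_gt h')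
  have := h _ ht
  rw [h2] at this
  have := le_max_left u 0
  linarith

private lemma neg_combo' {a c x y : ℝ} (ha : 0 ≤ a) (hc : 0 ≤ c) (hac : a + c = 1)
    (hx : x < 0) (hy : y < 0) : a * x + c * y < 0 := by
  rcases ha.lt_or_eq with h | h
  · nlinarith
  · nlinarith

private lemma fdecomp' {m : ℕ} (f : (ℝ × Vec m) →L[ℝ] ℝ) (r : ℝ) (s : Vec m) :
    f (r, s) = r * f (1, (0 : Vec m)) + ∑ j, s j * f ((0:ℝ), (Pi.single j 1 : Vec m)) := by
  have key : ((r, s) : ℝ × Vec m)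
      = r • ((1:ℝ), (0 : Vec m)) + ∑ j, s j • ((0:ℝ), (Pi.single j 1 : Vec m)) := by
    apply Prod.ext
    · simp [Prod.fst_sum]
    · simp [Prod.snd_sum]
      funext t
      simp [Finset.sum_apply, Pi.single_apply]
  rw [key, map_add, _root_.map_smul, _root_.map_sum]
  simp only [_root_.map_smul, smul_eq_mul]

private lemma dotN_add_left' {N k : ℕ} (u v w : VecN N k) :
    dotN (u + v) w = dotN u w + dotN v w := by
  simp [dotN, dot, add_mul, Finset.sum_add_distrib]

private lemma dotN_neg_left' {N k : ℕ} (u w : VecN N k) : dotN (-u) w = -dotN u w := by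
  simp [dotN, dot]

private lemma dotN_zero_right' {N k : ℕ} (u : VecN N k) : dotN u 0 = 0 := by
  simp [dotN, dot]

private lemma dotN_neg_right' {N k : ℕ} (u w : VecN N k) : dotN u (-w) = -dotN u w := by
  simp [dotN, dot]

private lemma dotN_add_right' {N k : ℕ} (u v w : VecN N k) :
    dotN u (v + w) = dotN u v + dotN u w := by
  simp [dotN, dot, mul_add, Finset.sum_add_distrib]

private lemma dotN_sub_right' {N k : ℕ} (u v w : VecN N k) :
    dotN u (v - w) = dotN u v - dotN u w := by
  simp [dotN, dot, mul_sub, Finset.sum_sub_distrib]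

private lemma dotN_smul_right' {N k : ℕ} (u : VecN N k) (a : ℝ) (v : VecN N k) :
    dotN u (a • v) = a * dotN u v := by
  simp [dotN, dot, Finset.mul_sum, mul_left_comm]

private lemma dot_zero_left' {k : ℕ} (v : Vec k) : dot 0 v = 0 := by simp [dot]

private lemma bigA_apply' {N n m : ℕ} (A : Fin N → Matrix (Fin m) (Fin n) ℝ)
    (x : VecN N n) (j : Fin m) :
    bigA A x j = ∑ i, ∑ k, A i j k * x i k := by
  simp [bigA, Matrix.mulVec, dotProduct, Finset.sum_apply]

private lemma bigA_affine' {N n m : ℕ} (A : Fin N → Matrix (Fin m) (Fin n) ℝ)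
    (a c : ℝ) (x x' : VecN N n) (j : Fin m) :
    bigA A (a • x + c • x') j = a * bigA A x j + c * bigA A x' j := by
  simp only [bigA_apply']
  rw [Finset.mul_sum, Finset.mul_sum, ← Finset.sum_add_distrib]
  refine Finset.sum_congr rfl fun i _ => ?_
  rw [Finset.mul_sum, Finset.mul_sum, ← Finset.sum_add_distrib]
  refine Finset.sum_congr rfl fun k _ => ?_
  simp only [Pi.add_apply, Pi.smul_apply, smul_eq_mul]
  ring

private lemma Psum_res' {N n m : ℕ} (A : Fin N → Matrix (Fin m) (Fin n) ℝ) (b : Fin N → Vec m)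
    (x : VecN N n) (j : Fin m) :
    Psum (fun i => (A i).mulVec (x i) - b i) j = bigA A x j - (∑ i, b i) j := by
  simp [Psum, bigA, Finset.sum_apply, Finset.sum_sub_distrib]

private lemma dot_mu_C' {N n m : ℕ} (A : Fin N → Matrix (Fin m) (Fin n) ℝ) (b : Fin N → Vec m)
    (μ : Vec m) (x : VecN N n) :
    ∑ i, dot μ ((A i).mulVec (x i) - b i) = ∑ j, (bigA A x j - (∑ i, b i) j) * μ j := by
  simp only [dot, Pi.sub_apply]
  rw [Finset.sum_comm]
  refine Finset.sum_congr rfl fun j _ => ?_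
  rw [← Finset.mul_sum, Finset.sum_sub_distrib]
  have h1 : ∑ i, (A i).mulVec (x i) j = bigA A x j := by
    simp [bigA, Finset.sum_apply]
  have h2 : ∑ i, b i j = (∑ i, b i) j := by simp [Finset.sum_apply]
  rw [h1, h2]; ring

/-- `x̄` is a v-GAE of the aggregative game iff `(x̄, ȳ, σ̄)`,
with `ȳ_i = A_i x̄_i - b_i` and `σ̄ = M_n x̄`, is a v-GNE of the extended game. -/
theorem stmt0 {N n m : ℕ} (hN : 0 < N) (hn : 0 < n) (hm : 0 < m)
    (Ω : Fin N → Set (Vec n)) (f : Fin N → Vec n → Vec n → ℝ)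
    (A : Fin N → Matrix (Fin m) (Fin n) ℝ) (b : Fin N → Vec m)
    (hΩne : ∀ i, (Ω i).Nonempty) (hΩcp : ∀ i, IsCompact (Ω i))
    (hΩcv : ∀ i, Convex ℝ (Ω i))
    (hfcont : ∀ i, Continuous (fun p : Vec n × Vec n => f i p.1 p.2))
    (hfconv : ∀ i w, ConvexOn ℝ Set.univ (fun z => f i z w))
    (slater : ∃ x0 : VecN N n, (∀ i, x0 i ∈ Ω i) ∧ ∀ j, bigA A x0 j < (∑ i, b i) j)
    (xbar : VecN N n) :
    isVGAE Ω f A b xbar ↔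
      isVGNEext Ω f A b xbar (fun i => (A i).mulVec (xbar i) - b i) (Mavg xbar) := by
  constructor
  · rintro ⟨⟨hΩx, hAx⟩, g, hg, hVI⟩
    obtain ⟨x0, hx0Ω, hx0s⟩ := slater
    -- Separation sets
    set O : Set (ℝ × Vec m) := {p | p.1 < 0 ∧ ∀ j, p.2 j < 0} with hOdef
    set K : Set (ℝ × Vec m) := {p | ∃ x : VecN N n, (∀ i, x i ∈ Ω i) ∧
        dotN g (x - xbar) ≤ p.1 ∧ ∀ j, bigA A x j - (∑ i, b i) j ≤ p.2 j} with hKdef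
    have hOopen : IsOpen O := by
      have hOe : O = {p : ℝ × Vec m | p.1 < 0} ∩ ⋂ j, {p : ℝ × Vec m | p.2 j < 0} := by
        ext p; simp [hOdef, Set.mem_iInter]
      rw [hOe]
      exact (isOpen_lt continuous_fst continuous_const).inter
        (isOpen_iInter_of_finite fun j =>
          isOpen_lt ((continuous_apply j).comp continuous_snd) continuous_const)
    have hOconv : Convex ℝ O := by
      rintro p ⟨hp1, hp2⟩ q ⟨hq1, hq2⟩ a c ha hc hac
      refine ⟨?_, fun j => ?_⟩
      · simpa using neg_combo' ha hc hac hp1 hq1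
      · simpa using neg_combo' ha hc hac (hp2 j) (hq2 j)
    have hKconv : Convex ℝ K := by
      rintro p ⟨x, hx, hx1, hx2⟩ q ⟨x', hx', hx1', hx2'⟩ a c ha hc hac
      refine ⟨a • x + c • x', fun i => ?_, ?_, fun j => ?_⟩
      · simpa using hΩcv i (hx i) (hx' i) ha hc hac
      · have e : a • x + c • x' - xbar = a • (x - xbar) + c • (x' - xbar) := by
          funext i j
          simp only [Pi.add_apply, Pi.sub_apply, Pi.smul_apply, smul_eq_mul]
          linear_combination xbar i j * hac
        rw [e, dotN_add_right', dotN_smul_right', dotN_smul_right']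
        have e1 := mul_le_mul_of_nonneg_left hx1 ha
        have e2 := mul_le_mul_of_nonneg_left hx1' hc
        simpa using add_le_add e1 e2
      · rw [bigA_affine']
        have e1 := mul_le_mul_of_nonneg_left (hx2 j) ha
        have e2 := mul_le_mul_of_nonneg_left (hx2' j) hc
        have : a * (bigA A x j - (∑ i, b i) j) + c * (bigA A x' j - (∑ i, b i) j)
            ≤ a * p.2 j + c * q.2 j := add_le_add e1 e2
        have hs : a * (∑ i, b i) j + c * (∑ i, b i) j = (∑ i, b i) j := by
          linear_combination ((∑ i, b i) j) * hac
        simp only [Prod.snd_add, Prod.smul_snd, Pi.add_apply, Pi.smul_apply, smul_eq_mul]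
        nlinarith [this]
    have hdisj : Disjoint O K := by
      rw [Set.disjoint_left]
      rintro p ⟨hp1, hp2⟩ ⟨x, hx, h1, h2⟩
      have hxX : x ∈ Xfeas Ω A b := ⟨hx, fun j => by have := (h2 j).trans_lt (hp2 j); linarith⟩
      have := hVI x hxX
      have h3 : dotN g (x - xbar) < 0 := h1.trans_lt hp1
      linarith
    obtain ⟨φ, u, hOlt, hKge⟩ := geometric_hahn_banach_open hOconv hOopen hKconv hdisj
    -- φ ≤ u on the closed nonpositive orthant
    have horth : ∀ p : ℝ × Vec m, p.1 ≤ 0 → (∀ j, p.2 j ≤ 0) → φ p ≤ u := by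
      intro p h1 h2
      apply eps_le' (c := φ (1, fun _ => (1:ℝ)))
      intro ε hε
      have hmem : (p - ε • ((1:ℝ), fun _ => (1:ℝ))) ∈ O := by
        refine ⟨?_, fun j => ?_⟩
        · simp only [Prod.fst_sub, Prod.smul_fst, smul_eq_mul, mul_one]
          linarith
        · simp only [Prod.snd_sub, Prod.smul_snd, Pi.sub_apply, Pi.smul_apply, smul_eq_mul,
            mul_one]
          linarith [h2 j]
      have := hOlt _ hmem
      rw [map_sub, _root_.map_smul, smul_eq_mul] at this
      linarith
    have hu0 : (0:ℝ) ≤ u := by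
      have := horth 0 le_rfl (fun j => le_rfl)
      rw [map_zero] at this
      exact this
    -- φ is nonpositive on the closed nonpositive orthant (cone argument)
    have hcoef : ∀ q : ℝ × Vec m, q.1 ≤ 0 → (∀ j, q.2 j ≤ 0) → φ q ≤ 0 := by
      intro q h1 h2
      apply cone_scale' (u := u)
      intro t ht
      have hmem : φ (t • q) ≤ u := by
        apply horth
        · simp only [Prod.smul_fst, smul_eq_mul]
          exact mul_nonpos_of_nonneg_of_nonpos ht.le h1
        · intro j
          simp only [Prod.smul_snd, Pi.smul_apply, smul_eq_mul]
          exact mul_nonpos_of_nonneg_of_nonpos ht.le (h2 j)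
      rwa [_root_.map_smul, smul_eq_mul] at hmem
    have hφ0 : (0:ℝ) ≤ φ (1, (0 : Vec m)) := by
      have := hcoef (-((1:ℝ), (0 : Vec m))) (by norm_num) (fun j => by simp)
      rw [map_neg] at this
      linarith
    have hφ' : ∀ j, (0:ℝ) ≤ φ ((0:ℝ), (Pi.single j 1 : Vec m)) := by
      intro j
      have := hcoef (-((0:ℝ), (Pi.single j 1 : Vec m))) (by norm_num)
        (fun j' => by
          simp only [Prod.snd_neg, Pi.neg_apply, Pi.single_apply, neg_nonpos]
          split <;> norm_num)
      rw [map_neg] at this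
      linarith
    -- Slater point in K
    have hKx0 : ((dotN g (x0 - xbar), fun j => bigA A x0 j - (∑ i, b i) j) : ℝ × Vec m) ∈ K :=
      ⟨x0, hx0Ω, le_rfl, fun j => le_rfl⟩
    -- φ (1,0) > 0
    have hφ0pos : (0:ℝ) < φ (1, (0 : Vec m)) := by
      rcases hφ0.lt_or_eq with hpos | heq
      · exact hpos
      · exfalso
        have hsum : u ≤ ∑ j, (bigA A x0 j - (∑ i, b i) j) * φ ((0:ℝ), (Pi.single j 1 : Vec m)) := by
          have h1 := hKge _ hKx0
          rw [fdecomp'] at h1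
          rw [← heq] at h1
          simpa using h1
        have hterm : ∀ j ∈ Finset.univ (α := Fin m),
            (bigA A x0 j - (∑ i, b i) j) * φ ((0:ℝ), (Pi.single j 1 : Vec m)) ≤ 0 :=
          fun j _ => mul_nonpos_of_nonpos_of_nonneg (by linarith [hx0s j]) (hφ' j)
        have hsn : ∑ j, (bigA A x0 j - (∑ i, b i) j) * φ ((0:ℝ), (Pi.single j 1 : Vec m)) ≤ 0 :=
          Finset.sum_nonpos hterm
        have huz : u = 0 := le_antisymm (hsum.trans hsn) hu0
        have hsumz := hsum
        rw [huz] at hsumz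
        have hsz : ∑ j, (bigA A x0 j - (∑ i, b i) j) * φ ((0:ℝ), (Pi.single j 1 : Vec m)) = 0 :=
          le_antisymm hsn hsumz
        have hall := (Finset.sum_eq_zero_iff_of_nonpos hterm).mp hsz
        have hφz : ∀ j, φ ((0:ℝ), (Pi.single j 1 : Vec m)) = 0 := by
          intro j
          have := hall j (Finset.mem_univ j)
          have hneg : bigA A x0 j - (∑ i, b i) j < 0 := by linarith [hx0s j]
          rcases mul_eq_zero.mp this with h | h
          · exact absurd h (ne_of_lt hneg)
          · exact h
        have hOm : ((-1:ℝ), (fun _ => (-1:ℝ) : Vec m)) ∈ O := ⟨by norm_num, fun j => by norm_num⟩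
        have := hOlt _ hOm
        rw [fdecomp'] at this
        simp only [hφz, ← heq] at this
        simp at this
        linarith [huz ▸ this]
    -- Multipliers
    set μ : Vec m := fun j => φ ((0:ℝ), (Pi.single j 1 : Vec m)) / φ (1, (0 : Vec m)) with hμdef
    have hμ0 : ∀ j, 0 ≤ μ j := fun j => div_nonneg (hφ' j) hφ0pos.le
    clear_value μ
    -- Lagrangian inequality
    have lag : ∀ x : VecN N n, (∀ i, x i ∈ Ω i) →
        0 ≤ dotN g (x - xbar) + ∑ j, (bigA A x j - (∑ i, b i) j) * μ j := by
      intro x hx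
      have hmem : ((dotN g (x - xbar), fun j => bigA A x j - (∑ i, b i) j) : ℝ × Vec m) ∈ K :=
        ⟨x, hx, le_rfl, fun j => le_rfl⟩
      have h1 := hu0.trans (hKge _ hmem)
      rw [fdecomp'] at h1
      have h2 := div_nonneg h1 hφ0pos.le
      have e : (dotN g (x - xbar) * φ (1, (0:Vec m)) +
            ∑ j, (bigA A x j - (∑ i, b i) j) * φ ((0:ℝ), (Pi.single j 1 : Vec m)))
            / φ (1, (0:Vec m))
          = dotN g (x - xbar) + ∑ j, (bigA A x j - (∑ i, b i) j) * μ j := by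
        rw [add_div, mul_div_cancel_right₀ _ (ne_of_gt hφ0pos), Finset.sum_div]
        congr 1
        exact Finset.sum_congr rfl fun j _ => by rw [mul_div_assoc, hμdef]
      rwa [e] at h2
    -- Complementary slackness
    have cs : ∑ j, (bigA A xbar j - (∑ i, b i) j) * μ j = 0 := by
      have h1 := lag xbar hΩx
      have h2 : dotN g (xbar - xbar) = 0 := by simp [dotN, dot]
      have h3 : ∑ j, (bigA A xbar j - (∑ i, b i) j) * μ j ≤ 0 :=
        Finset.sum_nonpos fun j _ =>
          mul_nonpos_of_nonpos_of_nonneg (by linarith [hAx j]) (hμ0 j)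
      linarith
    -- Construct the v-GNE certificate
    refine ⟨⟨fun j => ?_, rfl⟩, ?_⟩
    · rw [Psum_res']; linarith [hAx j]
    · refine ⟨(g + -g, (fun _ => -μ : VecN N m), 0), ⟨g, hg, (-g, (fun _ => -μ : VecN N m)),
        ⟨fun i => ⟨hΩx i, rfl⟩, ?_⟩, rfl⟩, ?_⟩
      · -- normal cone inequality
        rintro ⟨x', y'⟩ hq
        have hy' : y' = fun i => (A i).mulVec (x' i) - b i := funext fun i => (hq i).2
        subst hy'
        have e2 : dotN (fun _ => -μ : VecN N m)
            ((fun i => (A i).mulVec (x' i) - b i) - (fun i => (A i).mulVec (xbar i) - b i))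
            = -(∑ j, (bigA A x' j - (∑ i, b i) j) * μ j)
              + ∑ j, (bigA A xbar j - (∑ i, b i) j) * μ j := by
          have : ∀ i, dot (-μ) (((A i).mulVec (x' i) - b i) - ((A i).mulVec (xbar i) - b i))
              = -(dot μ ((A i).mulVec (x' i) - b i)) + dot μ ((A i).mulVec (xbar i) - b i) := by
            intro i
            simp [dot, mul_sub, sub_mul, Finset.sum_sub_distrib, Finset.sum_add_distrib]
            ring
          simp only [dotN, Pi.sub_apply, this, Finset.sum_add_distrib]
          rw [Finset.sum_neg_distrib, dot_mu_C', dot_mu_C']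
        have hlag := lag x' (fun i => (hq i).1)
        simp only [ip2, Prod.fst_sub, Prod.snd_sub]
        rw [dotN_neg_left', e2, cs]
        linarith
      · -- the variational inequality over 𝒱
        rintro ⟨x, y, σ⟩ ⟨hy, hσ⟩
        have h1 : dotN (g + -g) (x - xbar) = 0 := by
          simp [dotN, dot]
        have hswap : ∑ i, dot μ (y i) = ∑ j, Psum y j * μ j := by
          simp only [dot, Psum, Finset.sum_apply]
          rw [Finset.sum_comm]
          exact Finset.sum_congr rfl fun j _ => by rw [← Finset.mul_sum, mul_comm]
        have h2 : dotN (fun _ => -μ : VecN N m) (y - fun i => (A i).mulVec (xbar i) - b i)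
            = -(∑ j, Psum y j * μ j) + ∑ j, (bigA A xbar j - (∑ i, b i) j) * μ j := by
          have e : ∀ i, dot (-μ) (y i - ((A i).mulVec (xbar i) - b i))
              = -(dot μ (y i)) + dot μ ((A i).mulVec (xbar i) - b i) := by
            intro i
            simp [dot, mul_sub, Finset.sum_sub_distrib, Finset.sum_add_distrib,
              Finset.sum_neg_distrib]
            ring
          simp only [dotN, Pi.sub_apply, e, Finset.sum_add_distrib, Finset.sum_neg_distrib]
          rw [hswap, dot_mu_C']
        have h3 : ∑ j, Psum y j * μ j ≤ 0 :=
          Finset.sum_nonpos fun j _ => mul_nonpos_of_nonpos_of_nonneg (hy j) (hμ0 j)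
        simp only [ip3, Prod.fst_sub, Prod.snd_sub]
        rw [h1, h2, cs, dot_zero_left']
        linarith
  · rintro ⟨⟨hPy, _⟩, h, ⟨g, hg, ⟨u, w⟩, ⟨hCm, hnc⟩, rfl⟩, hVI⟩
    have hfeasX : xbar ∈ Xfeas Ω A b := by
      refine ⟨fun i => (hCm i).1, fun j => ?_⟩
      have := hPy j
      rw [Psum_res'] at this
      linarith
    have hlin : ∀ d : VecN N n, 0 ≤ dotN (g + u) d := by
      intro d
      have hmem : ((xbar + d, (fun i => (A i).mulVec (xbar i) - b i : VecN N m),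
          Mavg (xbar + d)) : VecN N n × VecN N m × Vec n) ∈ Vfeas N n m := ⟨hPy, rfl⟩
      have h0 := hVI _ hmem
      simp only [ip3, Prod.fst_sub, Prod.snd_sub, add_sub_cancel_left, sub_self,
        dotN_zero_right', dot_zero_left', add_zero] at h0
      exact h0
    have hzero : ∀ d : VecN N n, dotN (g + u) d = 0 := by
      intro d
      have hneg := hlin (-d)
      rw [dotN_neg_right'] at hneg
      exact le_antisymm (by linarith) (hlin d)
    refine ⟨hfeasX, g, hg, ?_⟩
    rintro x ⟨hxΩ, hxA⟩
    have hCx : ((x, (fun i => (A i).mulVec (x i) - b i : VecN N m)) :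
        VecN N n × VecN N m) ∈ Cset Ω A b := fun i => ⟨hxΩ i, rfl⟩
    have h1 := hnc _ hCx
    have hVy : ((xbar, (fun i => (A i).mulVec (x i) - b i : VecN N m), Mavg xbar) :
        VecN N n × VecN N m × Vec n) ∈ Vfeas N n m := by
      refine ⟨fun j => ?_, rfl⟩
      rw [Psum_res']
      linarith [hxA j]
    have h2 := hVI _ hVy
    simp only [ip3, Prod.fst_sub, Prod.snd_sub, sub_self, dotN_zero_right',
      dot_zero_left', add_zero, zero_add] at h2
    simp only [ip2, Prod.fst_sub, Prod.snd_sub] at h1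
    have h3 := hzero (x - xbar)
    rw [dotN_add_left'] at h3
    linarith
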